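/- arXiv:1707.01986 — 2 statements merged into one kernel-verified Lean document; each statement's English description precedes it below -/
import Mathlib

section
/- Let 0 ≤ t₀ < t₁ and let h : [t₀, t₁] → ℝ be a nonnegative bounded function. Suppose there exist δ ∈ [0,1), exponents α₁,…,α_N ≥ 0, and bounded monotone increasing functions A₁,…,A_N : [t₀,t₁] → ℝ (each nonnegative) such that for all t₀ ≤ t < s ≤ t₁ one has h(t) ≤ δ·h(s) + Σᵢ Aᵢ(s)/(s−t)^{αᵢ}. Then there exists a constant C depending only on δ and the αᵢ such that for all t₀ ≤ t < s ≤ t₁, h(t) ≤ C · Σᵢ Aᵢ(s)/(s−t)^{αᵢ}. -/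
open Set

/-- Giaquinta-type iteration lemma with bounded increasing coefficients `A i`. -/
theorem stmt0 (N : ℕ) (δ : ℝ) (hδ0 : 0 ≤ δ) (hδ1 : δ < 1)
    (α : Fin N → ℝ) (hα : ∀ i, 0 ≤ α i) :
    ∃ C : ℝ, 0 < C ∧
      ∀ (t₀ t₁ : ℝ) (h : ℝ → ℝ) (A : Fin N → ℝ → ℝ),
        0 ≤ t₀ → t₀ < t₁ →
        (∀ t ∈ Icc t₀ t₁, 0 ≤ h t) →
        (∃ K, ∀ t ∈ Icc t₀ t₁, h t ≤ K) →
        (∀ i, ∀ t ∈ Icc t₀ t₁, 0 ≤ A i t) →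
        (∀ i, ∃ K, ∀ t ∈ Icc t₀ t₁, A i t ≤ K) →
        (∀ i, MonotoneOn (A i) (Icc t₀ t₁)) →
        (∀ t s, t₀ ≤ t → t < s → s ≤ t₁ →
          h t ≤ δ * h s + ∑ i, A i s / (s - t) ^ (α i)) →
        ∀ t s, t₀ ≤ t → t < s → s ≤ t₁ →
          h t ≤ C * ∑ i, A i s / (s - t) ^ (α i) := by
  classical
  set a : ℝ := ∑ i, α i with ha_def
  have ha0 : 0 ≤ a := Finset.sum_nonneg fun i _ => hα i
  have hαa : ∀ i, α i ≤ a := fun i =>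
    Finset.single_le_sum (fun j _ => hα j) (Finset.mem_univ i)
  have hmid0 : (0:ℝ) < (δ + 1) / 2 := by linarith
  have hmid1 : (δ + 1) / 2 < 1 := by linarith
  set τ : ℝ := if a = 0 then 1/2 else ((δ + 1) / 2) ^ (1 / a) with hτdef
  have hτ0 : 0 < τ := by
    rw [hτdef]; split_ifs with hc
    · norm_num
    · exact Real.rpow_pos_of_pos hmid0 _
  have hτ1 : τ < 1 := by
    rw [hτdef]; split_ifs with hc
    · norm_num
    · have ha' : 0 < a := lt_of_le_of_ne ha0 (Ne.symm hc)
      exact Real.rpow_lt_one hmid0.le hmid1 (by positivity)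
  have h1τ : 0 < 1 - τ := by linarith
  have hδτ : δ < τ ^ a := by
    rw [hτdef]; split_ifs with hc
    · rw [hc, Real.rpow_zero]; exact hδ1
    · rw [← Real.rpow_mul hmid0.le, one_div_mul_cancel hc, Real.rpow_one]
      linarith
  have hτa0 : 0 < τ ^ a := Real.rpow_pos_of_pos hτ0 a
  set θ : ℝ := δ / τ ^ a with hθdef
  have hθ0 : 0 ≤ θ := div_nonneg hδ0 hτa0.le
  have hθ1 : θ < 1 := (div_lt_one hτa0).2 hδτ
  have hθi : ∀ i, δ / τ ^ (α i) ≤ θ := by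
    intro i
    have h1 : τ ^ a ≤ τ ^ (α i) :=
      Real.rpow_le_rpow_of_exponent_ge hτ0 hτ1.le (hαa i)
    rw [hθdef]
    gcongr
  have hθi0 : ∀ i, 0 ≤ δ / τ ^ (α i) := fun i =>
    div_nonneg hδ0 (Real.rpow_pos_of_pos hτ0 _).le
  set B : ℝ := 1 / (1 - τ) ^ a with hBdef
  have hB0 : 0 < B := by
    rw [hBdef]; positivity
  have hBi : ∀ i, 1 / (1 - τ) ^ (α i) ≤ B := by
    intro i
    have h1 : (1 - τ) ^ a ≤ (1 - τ) ^ (α i) :=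
      Real.rpow_le_rpow_of_exponent_ge h1τ (by linarith) (hαa i)
    rw [hBdef]
    gcongr
  set C : ℝ := B / (1 - θ) with hCdef
  have hC0 : 0 < C := by exact div_pos hB0 (by linarith)
  refine ⟨C, hC0, ?_⟩
  rintro t₀ t₁ h A ht₀0 ht₀1 hh0 ⟨K, hK⟩ hA0 _hAbd hAmono hiter t s hts1 hts2 hts3
  have hsIcc : s ∈ Icc t₀ t₁ := ⟨hts1.trans hts2.le, hts3⟩
  have hd : 0 < s - t := by linarith
  set S : ℝ := ∑ i, A i s / (s - t) ^ (α i) with hSdef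
  have hS0 : 0 ≤ S := by
    refine Finset.sum_nonneg fun i _ => div_nonneg (hA0 i s hsIcc) ?_
    exact (Real.rpow_pos_of_pos hd _).le
  -- iteration points
  set u : ℕ → ℝ := fun k => s - τ ^ k * (s - t) with hudef
  have hu0 : u 0 = t := by simp [hudef]
  have ht_le : ∀ k, t ≤ u k := by
    intro k
    have h1 : τ ^ k ≤ 1 := pow_le_one₀ hτ0.le hτ1.le
    have : τ ^ k * (s - t) ≤ 1 * (s - t) := by
      exact mul_le_mul_of_nonneg_right h1 hd.le
    simp only [hudef]; nlinarith
  have hu_lt_s : ∀ k, u k < s := by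
    intro k
    have : 0 < τ ^ k * (s - t) := by positivity
    simp only [hudef]; linarith
  have hstep : ∀ k, u (k+1) - u k = τ ^ k * (1 - τ) * (s - t) := by
    intro k
    simp only [hudef, pow_succ]
    ring
  have hu_mono : ∀ k, u k < u (k+1) := by
    intro k
    have h1 : 0 < τ ^ k * (1 - τ) * (s - t) := by positivity
    have := hstep k
    linarith
  have huIcc : ∀ k, u k ∈ Icc t₀ t₁ :=
    fun k => ⟨hts1.trans (ht_le k), (hu_lt_s k).le.trans hts3⟩
  have hIter1 : ∀ k, h (u k) ≤ δ * h (u (k+1)) +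
      ∑ i, A i (u (k+1)) / (u (k+1) - u k) ^ (α i) := by
    intro k
    exact hiter (u k) (u (k+1)) (huIcc k).1 (hu_mono k) (huIcc (k+1)).2
  -- the iterated inequality
  have hInd : ∀ m, h t ≤ δ ^ m * h (u m) +
      ∑ k ∈ Finset.range m, δ ^ k *
        ∑ i, A i (u (k+1)) / (u (k+1) - u k) ^ (α i) := by
    intro m
    induction m with
    | zero => simp [hu0]
    | succ m ih =>
      have h1 := hIter1 m
      have h2 : δ ^ m * h (u m) ≤ δ ^ m * (δ * h (u (m+1)) +
          ∑ i, A i (u (m+1)) / (u (m+1) - u m) ^ (α i)) :=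
        mul_le_mul_of_nonneg_left h1 (pow_nonneg hδ0 m)
      calc h t ≤ δ ^ m * h (u m) +
            ∑ k ∈ Finset.range m, δ ^ k *
              ∑ i, A i (u (k+1)) / (u (k+1) - u k) ^ (α i) := ih
        _ ≤ δ ^ m * (δ * h (u (m+1)) +
              ∑ i, A i (u (m+1)) / (u (m+1) - u m) ^ (α i)) +
            ∑ k ∈ Finset.range m, δ ^ k *
              ∑ i, A i (u (k+1)) / (u (k+1) - u k) ^ (α i) := by linarith
        _ = δ ^ (m+1) * h (u (m+1)) +
            ∑ k ∈ Finset.range (m+1), δ ^ k *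
              ∑ i, A i (u (k+1)) / (u (k+1) - u k) ^ (α i) := by
            rw [Finset.sum_range_succ]; ring
  -- bound for each summand
  have hTerm : ∀ k, δ ^ k * ∑ i, A i (u (k+1)) / (u (k+1) - u k) ^ (α i) ≤
      θ ^ k * (B * S) := by
    intro k
    rw [Finset.mul_sum]
    have hrw : θ ^ k * (B * S) = ∑ i, θ ^ k * (B * (A i s / (s - t) ^ (α i))) := by
      rw [hSdef, Finset.mul_sum, Finset.mul_sum]
    rw [hrw]
    refine Finset.sum_le_sum fun i _ => ?_
    have hAle : A i (u (k+1)) ≤ A i s :=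
      hAmono i (huIcc (k+1)) hsIcc (hu_lt_s (k+1)).le
    have hpow : ((τ:ℝ) ^ k) ^ (α i) = (τ ^ (α i)) ^ k := by
      rw [← Real.rpow_natCast τ k, ← Real.rpow_natCast (τ ^ (α i)) k,
        ← Real.rpow_mul hτ0.le, ← Real.rpow_mul hτ0.le, mul_comm]
    have hden : (u (k+1) - u k) ^ (α i) =
        (τ ^ (α i)) ^ k * ((1 - τ) ^ (α i) * (s - t) ^ (α i)) := by
      rw [hstep k, Real.mul_rpow (by positivity) hd.le,
        Real.mul_rpow (by positivity) h1τ.le, hpow, mul_assoc]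
    have hτi0 : (0:ℝ) < τ ^ (α i) := Real.rpow_pos_of_pos hτ0 _
    have h1τi0 : (0:ℝ) < (1 - τ) ^ (α i) := Real.rpow_pos_of_pos h1τ _
    have hdi0 : (0:ℝ) < (s - t) ^ (α i) := Real.rpow_pos_of_pos hd _
    have heq : δ ^ k * (A i (u (k+1)) / ((τ ^ (α i)) ^ k *
        ((1 - τ) ^ (α i) * (s - t) ^ (α i)))) =
        (δ / τ ^ (α i)) ^ k *
          ((1 / (1 - τ) ^ (α i)) * (A i (u (k+1)) / (s - t) ^ (α i))) := by
      rw [div_pow]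
      field_simp
    rw [hden, heq]
    have hAnn : 0 ≤ A i (u (k+1)) := hA0 i _ (huIcc (k+1))
    gcongr
    · exact hθi i
    · exact hBi i
  -- combine
  have hmain : ∀ m, h t ≤ δ ^ m * K + C * S := by
    intro m
    have h1 := hInd m
    have h2 : δ ^ m * h (u m) ≤ δ ^ m * K :=
      mul_le_mul_of_nonneg_left (hK (u m) (huIcc m)) (pow_nonneg hδ0 m)
    have h3 : ∑ k ∈ Finset.range m, δ ^ k *
          ∑ i, A i (u (k+1)) / (u (k+1) - u k) ^ (α i) ≤
        ∑ k ∈ Finset.range m, θ ^ k * (B * S) :=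
      Finset.sum_le_sum fun k _ => hTerm k
    have h4 : ∑ k ∈ Finset.range m, θ ^ k * (B * S) =
        (∑ k ∈ Finset.range m, θ ^ k) * (B * S) := (Finset.sum_mul _ _ _).symm
    have h5 : (∑ k ∈ Finset.range m, θ ^ k) ≤ (1 - θ)⁻¹ := by
      refine sum_le_hasSum (L := SummationFilter.unconditional ℕ) _ (fun k _ => pow_nonneg hθ0 k) ?_
      exact hasSum_geometric_of_lt_one hθ0 hθ1
    have h6 : (∑ k ∈ Finset.range m, θ ^ k) * (B * S) ≤ (1 - θ)⁻¹ * (B * S) :=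
      mul_le_mul_of_nonneg_right h5 (by positivity)
    have h7 : (1 - θ)⁻¹ * (B * S) = C * S := by
      rw [hCdef]; field_simp
    calc h t ≤ δ ^ m * h (u m) + ∑ k ∈ Finset.range m, δ ^ k *
          ∑ i, A i (u (k+1)) / (u (k+1) - u k) ^ (α i) := h1
      _ ≤ δ ^ m * K + (1 - θ)⁻¹ * (B * S) := by
          rw [h4] at h3; linarith
      _ = δ ^ m * K + C * S := by rw [h7]
  have hlim : Filter.Tendsto (fun m : ℕ => δ ^ m * K + C * S) Filter.atTop
      (nhds (C * S)) := by
    simpa using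
      ((tendsto_pow_atTop_nhds_zero_of_lt_one hδ0 hδ1).mul_const K).add_const (C * S)
  exact ge_of_tendsto hlim (Filter.Eventually.of_forall hmain)
end

section
/- Let g : Ω → ℝ be nonnegative and measurable on a measure space of finite measure, let Λ > 0, and suppose ∫_{{g > Λ}} g dμ + ∫_Λ^∞ (1/t) ( ∫_{{g > t}} g dμ ) dt ≤ A for some A. Then ∫_{{g > Λ}} g · log(e + g/Λ) dμ ≤ 2A. In particular, combining with ∫_{{g ≤ Λ}} g · log(e + g/Λ) dμ ≤ log(e+1) · ∫_{{g ≤ Λ}} g dμ, one controls the full L log L integral of g (normalized by Λ). -/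
open MeasureTheory Set
open scoped ENNReal

private lemma aux_log {Λ x : ℝ} (hΛ : 0 < Λ) (hx : Λ < x) :
    x * Real.log (Real.exp 1 + x / Λ) ≤ 2 * (x * Real.log (x / Λ) + x) := by
  have hx0 : 0 < x := hΛ.trans hx
  have hy : 1 < x / Λ := (one_lt_div hΛ).mpr hx
  set y := x / Λ with hy_def
  have he : (2.7 : ℝ) < Real.exp 1 := by
    have := Real.exp_one_gt_d9
    linarith
  have hey : 0 < Real.exp 1 * y := by positivity
  have h1 : Real.exp 1 + y ≤ (Real.exp 1 * y) ^ 2 := by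
    calc Real.exp 1 + y ≤ Real.exp 1 * y + y := by nlinarith
      _ = (Real.exp 1 + 1) * y := by ring
      _ ≤ (Real.exp 1 * Real.exp 1) * y := by nlinarith
      _ ≤ (Real.exp 1 * Real.exp 1) * (y * y) := by
          nlinarith [mul_pos (by linarith : (0:ℝ) < y) (by linarith : (0:ℝ) < y - 1)]
      _ = (Real.exp 1 * y) ^ 2 := by ring
  have h2 : Real.log (Real.exp 1 + y) ≤ Real.log ((Real.exp 1 * y) ^ 2) :=
    Real.log_le_log (by positivity) h1
  have h3 : Real.log ((Real.exp 1 * y) ^ 2) = 2 * (1 + Real.log y) := by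
    rw [Real.log_pow, Real.log_mul (ne_of_gt (Real.exp_pos 1)) (by linarith), Real.log_exp]
    ring
  have h4 : Real.log (Real.exp 1 + y) ≤ 2 * (1 + Real.log y) := h2.trans_eq h3
  nlinarith [Real.log_nonneg hy.le]

private lemma aux_tonelli {Ω : Type*} [MeasurableSpace Ω] (μ : Measure Ω) [IsFiniteMeasure μ]
    (g : Ω → ℝ) (hg0 : ∀ z, 0 ≤ g z) (hgm : Measurable g) (hgi : Integrable g μ)
    (Λ : ℝ) (hΛ : 0 < Λ) :
    (∫⁻ z in {z | Λ < g z}, ENNReal.ofReal (g z * Real.log (g z / Λ)) ∂μ)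
      = ∫⁻ t in Ioi Λ, ENNReal.ofReal ((1 / t) * ∫ z in {z | t < g z}, g z ∂μ) := by
  set f : ℝ → Ω → ℝ≥0∞ := fun t z =>
    Set.indicator {p : ℝ × Ω | p.1 < g p.2} (fun p => ENNReal.ofReal (g p.2 / p.1)) (t, z)
    with hf_def
  have hset : MeasurableSet {p : ℝ × Ω | p.1 < g p.2} :=
    measurableSet_lt measurable_fst (hgm.comp measurable_snd)
  have hfm : AEMeasurable (Function.uncurry f)
      ((volume.restrict (Ioi Λ)).prod μ) := by
    apply Measurable.aemeasurable
    apply Measurable.indicator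
    · exact (ENNReal.measurable_ofReal.comp
        ((hgm.comp measurable_snd).div measurable_fst))
    · exact hset
  have swap := lintegral_lintegral_swap (μ := volume.restrict (Ioi Λ)) (ν := μ) hfm
  have hRHS : (∫⁻ t in Ioi Λ, ∫⁻ z, f t z ∂μ)
      = ∫⁻ t in Ioi Λ, ENNReal.ofReal ((1 / t) * ∫ z in {z | t < g z}, g z ∂μ) := by
    apply setLIntegral_congr_fun measurableSet_Ioi
    intro t ht; beta_reduce
    have ht0 : 0 < t := hΛ.trans ht
    have h1 : (fun z => f t z)
        = Set.indicator {z | t < g z} (fun z => ENNReal.ofReal (g z / t)) := by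
      funext z
      by_cases h : t < g z
      · simp [hf_def, Set.indicator_of_mem, h]
      · simp [hf_def, Set.indicator_of_notMem, h]
    rw [h1, lintegral_indicator (measurableSet_lt measurable_const hgm)]
    have h2 : ∀ z, ENNReal.ofReal (g z / t)
        = ENNReal.ofReal (1 / t) * ENNReal.ofReal (g z) := by
      intro z
      rw [← ENNReal.ofReal_mul (by positivity), one_div, inv_mul_eq_div]
    simp_rw [h2]
    rw [lintegral_const_mul' _ _ ENNReal.ofReal_ne_top,
      ← ofReal_integral_eq_lintegral_ofReal
        (hgi.integrableOn)
        (Filter.Eventually.of_forall fun z => hg0 z),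
      ← ENNReal.ofReal_mul (by positivity)]
  have hLHS : (∫⁻ z, ∫⁻ t in Ioi Λ, f t z ∂volume ∂μ)
      = ∫⁻ z in {z | Λ < g z}, ENNReal.ofReal (g z * Real.log (g z / Λ)) ∂μ := by
    have key : ∀ z, (∫⁻ t in Ioi Λ, f t z ∂volume)
        = Set.indicator {z | Λ < g z}
            (fun z => ENNReal.ofReal (g z * Real.log (g z / Λ))) z := by
      intro z
      have h1 : (fun t => f t z)
          = Set.indicator (Iio (g z)) (fun t => ENNReal.ofReal (g z / t)) := by
        funext t
        by_cases h : t < g z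
        · simp [hf_def, Set.indicator_of_mem, h]
        · simp [hf_def, Set.indicator_of_notMem, h]
      rw [h1, lintegral_indicator measurableSet_Iio,
        Measure.restrict_restrict measurableSet_Iio]
      have hinter : Iio (g z) ∩ Ioi Λ = Ioo Λ (g z) := by
        ext t; simp [Ioo, and_comm]
      rw [hinter]
      by_cases hz : Λ < g z
      · rw [Set.indicator_of_mem (show z ∈ {z | Λ < g z} from hz)]
        have hint : IntegrableOn (fun t => g z / t) (Ioo Λ (g z)) volume := by
          apply (ContinuousOn.integrableOn_Icc ?_).mono_set Ioo_subset_Icc_self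
          apply ContinuousOn.div continuousOn_const continuousOn_id
          intro t ht
          exact ne_of_gt (lt_of_lt_of_le hΛ ht.1)
        rw [← ofReal_integral_eq_lintegral_ofReal hint ?_]
        · congr 1
          have hIoo : ∫ t in Ioo Λ (g z), g z / t
              = ∫ t in Ioc Λ (g z), g z / t := by
            apply setIntegral_congr_set Ioo_ae_eq_Ioc
          rw [hIoo, ← intervalIntegral.integral_of_le hz.le]
          simp_rw [div_eq_mul_inv]
          rw [intervalIntegral.integral_const_mul, integral_inv_of_pos hΛ (hΛ.trans hz),
            div_eq_mul_inv]
        · apply ae_restrict_of_forall_mem measurableSet_Ioo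
          intro t ht
          exact div_nonneg (hg0 z) (hΛ.trans ht.1).le
      · rw [Set.indicator_of_notMem (show z ∉ {z | Λ < g z} from hz)]
        have : Ioo Λ (g z) = ∅ := Ioo_eq_empty (by exact fun h => hz h)
        rw [this]
        simp
    rw [lintegral_congr key, lintegral_indicator (measurableSet_lt measurable_const hgm)]
  rw [← hRHS, swap, hLHS]

/-- Layer-cake estimate used in the `L log L` maximal-function inequality: if the
truncated integral plus the logarithmic layer integral are bounded by `A`, then the
`L log L` integral of `g` above level `Λ` is at most `2A`; moreover below level `Λ`
the `L log L` integrand is trivially controlled. -/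
theorem stmt5 {Ω : Type*} [MeasurableSpace Ω] (μ : Measure Ω) [IsFiniteMeasure μ]
    (g : Ω → ℝ) (hg0 : ∀ z, 0 ≤ g z) (hgm : Measurable g) (hgi : Integrable g μ)
    (Λ : ℝ) (hΛ : 0 < Λ) (A : ℝ)
    (hA : (∫ z in {z | Λ < g z}, g z ∂μ) +
        (∫ t in Ioi Λ, (1 / t) * ∫ z in {z | t < g z}, g z ∂μ) ≤ A) :
    (∫ z in {z | Λ < g z}, g z * Real.log (Real.exp 1 + g z / Λ) ∂μ) ≤ 2 * A ∧
    (∫ z in {z | g z ≤ Λ}, g z * Real.log (Real.exp 1 + g z / Λ) ∂μ) ≤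
      Real.log (Real.exp 1 + 1) * ∫ z in {z | g z ≤ Λ}, g z ∂μ := by
  have hS : MeasurableSet {z | Λ < g z} := measurableSet_lt measurable_const hgm
  have hT : MeasurableSet {z | g z ≤ Λ} := measurableSet_le hgm measurable_const
  set k : Ω → ℝ := fun z => g z * Real.log (Real.exp 1 + g z / Λ) with hk_def
  set h : Ω → ℝ := fun z => g z * Real.log (g z / Λ) with hh_def
  have hk_meas : Measurable k :=
    hgm.mul (Real.measurable_log.comp (measurable_const.add (hgm.div_const Λ)))
  have hh_meas : Measurable h :=
    hgm.mul (Real.measurable_log.comp (hgm.div_const Λ))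
  have hk_nonneg : ∀ z, 0 ≤ k z := by
    intro z
    apply mul_nonneg (hg0 z)
    apply Real.log_nonneg
    have h1 : 0 ≤ g z / Λ := div_nonneg (hg0 z) hΛ.le
    nlinarith [Real.exp_one_gt_d9]
  have hhk : ∀ z ∈ {z | Λ < g z}, 0 ≤ h z ∧ h z ≤ k z := by
    intro z hz
    have hz' : Λ < g z := hz
    have h1 : 1 ≤ g z / Λ := (one_le_div hΛ).mpr hz'.le
    constructor
    · exact mul_nonneg (hg0 z) (Real.log_nonneg h1)
    · apply mul_le_mul_of_nonneg_left _ (hg0 z)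
      apply Real.log_le_log (by linarith)
      nlinarith [Real.exp_one_gt_d9]
  have hIg : 0 ≤ ∫ z in {z | Λ < g z}, g z ∂μ :=
    setIntegral_nonneg hS fun z _ => hg0 z
  have hIlayer : 0 ≤ ∫ t in Ioi Λ, (1 / t) * ∫ z in {z | t < g z}, g z ∂μ := by
    apply setIntegral_nonneg measurableSet_Ioi
    intro t ht
    have ht0 : 0 < t := hΛ.trans ht
    exact mul_nonneg (by positivity)
      (setIntegral_nonneg (measurableSet_lt measurable_const hgm) fun z _ => hg0 z)
  constructor
  · -- part 1
    by_cases hR : (∫⁻ t in Ioi Λ,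
        ENNReal.ofReal ((1 / t) * ∫ z in {z | t < g z}, g z ∂μ)) = ⊤
    · -- infinite case: k is not integrable on S, so its integral is 0
      have hh_top : (∫⁻ z in {z | Λ < g z}, ENNReal.ofReal (h z) ∂μ) = ⊤ := by
        rw [aux_tonelli μ g hg0 hgm hgi Λ hΛ]; exact hR
      have hknint : ¬ IntegrableOn k {z | Λ < g z} μ := by
        intro hk
        have hh_int : IntegrableOn h {z | Λ < g z} μ := by
          apply Integrable.mono hk hh_meas.aestronglyMeasurable
          apply ae_restrict_of_forall_mem hS
          intro z hz
          obtain ⟨h1, h2⟩ := hhk z hz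
          rw [Real.norm_of_nonneg h1, Real.norm_of_nonneg (hk_nonneg z)]
          exact h2
        have := ofReal_integral_eq_lintegral_ofReal hh_int
          (ae_restrict_of_forall_mem hS fun z hz => (hhk z hz).1)
        rw [hh_top] at this
        exact ENNReal.ofReal_ne_top this
      have hlay0 : (∫ t in Ioi Λ, (1 / t) * ∫ z in {z | t < g z}, g z ∂μ) = 0 := by
        apply integral_undef
        intro hint
        have hnn : 0 ≤ᵐ[volume.restrict (Ioi Λ)]
            fun t => (1 / t) * ∫ z in {z | t < g z}, g z ∂μ := by
          apply ae_restrict_of_forall_mem measurableSet_Ioi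
          intro t ht
          have ht0 : 0 < t := hΛ.trans ht
          exact mul_nonneg (by positivity)
            (setIntegral_nonneg (measurableSet_lt measurable_const hgm) fun z _ => hg0 z)
        have := (hasFiniteIntegral_iff_ofReal hnn).mp hint.hasFiniteIntegral
        rw [hR] at this
        exact (lt_irrefl _) this
      rw [integral_undef hknint]
      rw [hlay0] at hA
      linarith
    · -- finite case
      have hnn : 0 ≤ᵐ[volume.restrict (Ioi Λ)]
          fun t => (1 / t) * ∫ z in {z | t < g z}, g z ∂μ := by
        apply ae_restrict_of_forall_mem measurableSet_Ioi
        intro t ht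
        have ht0 : 0 < t := hΛ.trans ht
        exact mul_nonneg (by positivity)
          (setIntegral_nonneg (measurableSet_lt measurable_const hgm) fun z _ => hg0 z)
      have hF_anti : Antitone fun t : ℝ => ∫ z in {z | t < g z}, g z ∂μ := by
        intro s t hst
        apply setIntegral_mono_set hgi.integrableOn
          (Filter.Eventually.of_forall hg0)
        exact HasSubset.Subset.eventuallyLE fun z hz => lt_of_le_of_lt hst hz
      have hLF_meas : Measurable fun t => (1 / t) * ∫ z in {z | t < g z}, g z ∂μ :=
        (measurable_const.div measurable_id).mul hF_anti.measurable
      have hLF_int : IntegrableOn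
          (fun t => (1 / t) * ∫ z in {z | t < g z}, g z ∂μ) (Ioi Λ) volume :=
        ⟨hLF_meas.aestronglyMeasurable,
          (hasFiniteIntegral_iff_ofReal hnn).mpr (lt_top_iff_ne_top.mpr hR)⟩
      have hofl := ofReal_integral_eq_lintegral_ofReal hLF_int hnn
      have hh_nn : 0 ≤ᵐ[μ.restrict {z | Λ < g z}] h :=
        ae_restrict_of_forall_mem hS fun z hz => (hhk z hz).1
      have hh_int : IntegrableOn h {z | Λ < g z} μ := by
        refine ⟨hh_meas.aestronglyMeasurable, (hasFiniteIntegral_iff_ofReal hh_nn).mpr ?_⟩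
        rw [aux_tonelli μ g hg0 hgm hgi Λ hΛ]
        exact lt_top_iff_ne_top.mpr hR
      have hofh := ofReal_integral_eq_lintegral_ofReal hh_int hh_nn
      have h_eq : (∫ z in {z | Λ < g z}, h z ∂μ)
          = ∫ t in Ioi Λ, (1 / t) * ∫ z in {z | t < g z}, g z ∂μ := by
        have heq2 : ENNReal.ofReal (∫ z in {z | Λ < g z}, h z ∂μ)
            = ENNReal.ofReal (∫ t in Ioi Λ, (1 / t) * ∫ z in {z | t < g z}, g z ∂μ) := by
          rw [hofh, hofl, aux_tonelli μ g hg0 hgm hgi Λ hΛ]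
        have h1 : 0 ≤ ∫ z in {z | Λ < g z}, h z ∂μ := integral_nonneg_of_ae hh_nn
        exact (ENNReal.ofReal_eq_ofReal_iff h1 hIlayer).mp heq2
      have hbound_int : IntegrableOn (fun z => 2 * (h z + g z)) {z | Λ < g z} μ :=
        (hh_int.add hgi.integrableOn).const_mul 2
      have hk_int : IntegrableOn k {z | Λ < g z} μ := by
        apply Integrable.mono hbound_int hk_meas.aestronglyMeasurable
        apply ae_restrict_of_forall_mem hS
        intro z hz
        obtain ⟨h1, _⟩ := hhk z hz
        rw [Real.norm_of_nonneg (hk_nonneg z), Real.norm_of_nonneg (by linarith [hg0 z] : (0:ℝ) ≤ 2 * (h z + g z))]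
        exact aux_log hΛ hz
      calc (∫ z in {z | Λ < g z}, k z ∂μ)
          ≤ ∫ z in {z | Λ < g z}, 2 * (h z + g z) ∂μ :=
            setIntegral_mono_on hk_int hbound_int hS fun z hz => aux_log hΛ hz
        _ = 2 * ((∫ z in {z | Λ < g z}, h z ∂μ) + ∫ z in {z | Λ < g z}, g z ∂μ) := by
            rw [integral_const_mul, integral_add hh_int hgi.integrableOn]
        _ ≤ 2 * A := by rw [h_eq]; linarith
  · -- part 2
    have hkT : ∀ z ∈ {z | g z ≤ Λ}, k z ≤ Real.log (Real.exp 1 + 1) * g z := by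
      intro z hz
      have hz' : g z ≤ Λ := hz
      have h1 : g z / Λ ≤ 1 := (div_le_one hΛ).mpr hz'
      have h2 : Real.log (Real.exp 1 + g z / Λ) ≤ Real.log (Real.exp 1 + 1) :=
        Real.log_le_log (by nlinarith [Real.exp_one_gt_d9, div_nonneg (hg0 z) hΛ.le])
          (by linarith)
      calc k z ≤ g z * Real.log (Real.exp 1 + 1) :=
            mul_le_mul_of_nonneg_left h2 (hg0 z)
        _ = Real.log (Real.exp 1 + 1) * g z := mul_comm _ _
    have hbound_int : IntegrableOn (fun z => Real.log (Real.exp 1 + 1) * g z)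
        {z | g z ≤ Λ} μ := hgi.integrableOn.const_mul _
    have hk_int : IntegrableOn k {z | g z ≤ Λ} μ := by
      apply Integrable.mono hbound_int hk_meas.aestronglyMeasurable
      apply ae_restrict_of_forall_mem hT
      intro z hz
      rw [Real.norm_of_nonneg (hk_nonneg z), Real.norm_of_nonneg
        (mul_nonneg (Real.log_nonneg (by nlinarith [Real.exp_one_gt_d9])) (hg0 z))]
      exact hkT z hz
    calc (∫ z in {z | g z ≤ Λ}, k z ∂μ)
        ≤ ∫ z in {z | g z ≤ Λ}, Real.log (Real.exp 1 + 1) * g z ∂μ :=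
          setIntegral_mono_on hk_int hbound_int hT hkT
      _ = Real.log (Real.exp 1 + 1) * ∫ z in {z | g z ≤ Λ}, g z ∂μ := integral_const_mul _ _
end
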